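/- For all real z ∈ [0,1] and real p ≥ 2, (1+z)^p + (1−z)^p ≥ 2 + z^p + (p(p−1)/2) z^2. -/

import Mathlib

open Real Set

private lemma hd_add (q t : ℝ) (hq : 1 ≤ q) :
    HasDerivAt (fun x : ℝ => (1 + x) ^ q) (q * (1 + t) ^ (q - 1)) t := by
  have h1 : HasDerivAt (fun x : ℝ => 1 + x) 1 t := (hasDerivAt_id t).const_add 1
  have h2 := Real.hasDerivAt_rpow_const (x := 1 + t) (p := q) (Or.inr hq)
  simpa [Function.comp_def] using h2.comp t h1

private lemma hd_sub (q t : ℝ) (hq : 1 ≤ q) :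
    HasDerivAt (fun x : ℝ => (1 - x) ^ q) (-(q * (1 - t) ^ (q - 1))) t := by
  have h1 : HasDerivAt (fun x : ℝ => 1 - x) (-1) t := by
    exact (hasDerivAt_id' t).const_sub 1
  have h2 := Real.hasDerivAt_rpow_const (x := 1 - t) (p := q) (Or.inr hq)
  have := h2.comp t h1
  simpa [mul_comm, Function.comp_def] using this

private lemma superadd {r t : ℝ} (hr : 1 ≤ r) (ht0 : 0 ≤ t) (ht1 : t ≤ 1) :
    1 + t ^ r ≤ (1 + t) ^ r := by
  have h1 : t ^ r ≤ t := by
    rcases eq_or_lt_of_le ht0 with h | h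
    · rw [← h, Real.zero_rpow (by linarith)]
    · calc t ^ r ≤ t ^ (1:ℝ) := Real.rpow_le_rpow_of_exponent_ge h ht1 hr
        _ = t := Real.rpow_one t
  have h2 : 1 + r * t ≤ (1 + t) ^ r :=
    one_add_mul_self_le_rpow_one_add (by linarith) hr
  nlinarith

private lemma key (q : ℝ) (hq : 1 ≤ q) :
    ∀ t ∈ Icc (0:ℝ) 1, t ^ q + q * t ≤ (1 + t) ^ q - (1 - t) ^ q := by
  set φ : ℝ → ℝ := fun t => (1 + t) ^ q - (1 - t) ^ q - t ^ q - q * t with hφ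
  have hdφ : ∀ t : ℝ, HasDerivAt φ
      (q * (1 + t) ^ (q - 1) + q * (1 - t) ^ (q - 1) - q * t ^ (q - 1) - q) t := by
    intro t
    have h3 := Real.hasDerivAt_rpow_const (x := t) (p := q) (Or.inr hq)
    have h4 : HasDerivAt (fun x : ℝ => q * x) q t := by
      simpa using (hasDerivAt_id t).const_mul q
    have := (((hd_add q t hq).sub (hd_sub q t hq)).sub h3).sub h4
    refine this.congr_deriv ?_
    ring
  have hsuff : ∀ t ∈ Icc (0:ℝ) 1, 0 ≤ φ t := by
    rcases le_total 2 q with h2q | h2q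
    · -- q ≥ 2 : φ' ≥ 0 on [0,1], φ 0 = 0
      have hmono : MonotoneOn φ (Icc 0 1) := by
        refine monotoneOn_of_deriv_nonneg (convex_Icc 0 1)
          (fun t _ => (hdφ t).continuousAt.continuousWithinAt)
          (fun t _ => ((hdφ t).differentiableAt).differentiableWithinAt) ?_
        intro t ht
        rw [interior_Icc] at ht
        rw [(hdφ t).deriv]
        have hr : 1 ≤ q - 1 := by linarith
        have h1 : 1 + t ^ (q-1) ≤ (1 + t) ^ (q-1) := superadd hr ht.1.le ht.2.le
        have h2 : (0:ℝ) ≤ (1 - t) ^ (q-1) := Real.rpow_nonneg (by linarith [ht.2]) _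
        have hq0 : (0:ℝ) ≤ q := by linarith
        nlinarith
      intro t ht
      have h0 : φ 0 = 0 := by
        simp [hφ, Real.zero_rpow (show q ≠ 0 by linarith), Real.one_rpow]
      have := hmono (left_mem_Icc.mpr zero_le_one) ht ht.1
      linarith
    · -- 1 ≤ q ≤ 2 : φ concave, nonneg at endpoints
      have hconc : ConcaveOn ℝ (Icc 0 1) φ := by
        refine concaveOn_of_hasDerivWithinAt2_nonpos (convex_Icc 0 1)
          (f' := fun t => q * (1 + t) ^ (q - 1) + q * (1 - t) ^ (q - 1) - q * t ^ (q - 1) - q)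
          (f'' := fun t => q * ((q-1) * (1 + t) ^ (q - 2)) - q * ((q-1) * (1 - t) ^ (q - 2))
            - q * ((q-1) * t ^ (q - 2)))
          (fun t _ => (hdφ t).continuousAt.continuousWithinAt) ?_ ?_ ?_
        · intro t _
          exact (hdφ t).hasDerivWithinAt
        · intro t ht
          rw [interior_Icc] at ht
          have ha : HasDerivAt (fun x : ℝ => (1 + x) ^ (q-1)) ((q-1) * (1 + t) ^ (q - 2)) t := by
            have h1 : HasDerivAt (fun x : ℝ => 1 + x) 1 t := (hasDerivAt_id t).const_add 1
            have h2 := Real.hasDerivAt_rpow_const (x := 1 + t) (p := q - 1)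
              (Or.inl (by nlinarith [ht.1]))
            have := h2.comp t h1
            simpa [show q - 1 - 1 = q - 2 by ring, Function.comp_def] using this
          have hb : HasDerivAt (fun x : ℝ => (1 - x) ^ (q-1)) (-((q-1) * (1 - t) ^ (q - 2))) t := by
            have h1 : HasDerivAt (fun x : ℝ => 1 - x) (-1) t := by
              exact (hasDerivAt_id' t).const_sub 1
            have h2 := Real.hasDerivAt_rpow_const (x := 1 - t) (p := q - 1)
              (Or.inl (by nlinarith [ht.2]))
            have := h2.comp t h1
            simpa [show q - 1 - 1 = q - 2 by ring, mul_comm, Function.comp_def] using this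
          have hc : HasDerivAt (fun x : ℝ => x ^ (q-1)) ((q-1) * t ^ (q - 2)) t := by
            have h2 := Real.hasDerivAt_rpow_const (x := t) (p := q - 1) (Or.inl ht.1.ne')
            simpa [show q - 1 - 1 = q - 2 by ring] using h2
          have hder := (((ha.const_mul q).add (hb.const_mul q)).sub (hc.const_mul q)).sub
            (hasDerivAt_const t q)
          have h' := hder.hasDerivWithinAt (s := interior (Icc (0:ℝ) 1))
          refine h'.congr_deriv ?_
          ring
        · intro t ht
          rw [interior_Icc] at ht
          have h1 : (1 + t) ^ (q - 2) ≤ 1 :=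
            Real.rpow_le_one_of_one_le_of_nonpos (by linarith [ht.1]) (by linarith)
          have h2 : (1:ℝ) ≤ (1 - t) ^ (q - 2) := by
            have h3 := Real.rpow_le_rpow_of_nonpos (show (0:ℝ) < 1 - t by linarith [ht.2])
              (show (1:ℝ) - t ≤ 1 by linarith [ht.1]) (show q - 2 ≤ 0 by linarith)
            simpa using h3
          have h3 : (0:ℝ) ≤ t ^ (q - 2) := Real.rpow_nonneg ht.1.le _
          have hq0 : (0:ℝ) ≤ q := by linarith
          have hq1 : (0:ℝ) ≤ q - 1 := by linarith
          show q * ((q-1) * (1 + t) ^ (q - 2)) - q * ((q-1) * (1 - t) ^ (q - 2))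
            - q * ((q-1) * t ^ (q - 2)) ≤ 0
          have heq2 : q * ((q-1) * (1 + t) ^ (q - 2)) - q * ((q-1) * (1 - t) ^ (q - 2))
              - q * ((q-1) * t ^ (q - 2))
              = (q * (q-1)) * ((1 + t) ^ (q - 2) - (1 - t) ^ (q - 2) - t ^ (q - 2)) := by ring
          rw [heq2]
          exact mul_nonpos_of_nonneg_of_nonpos (mul_nonneg hq0 hq1) (by linarith)
      intro t ht
      have h0 : φ 0 = 0 := by
        simp [hφ, Real.zero_rpow (show q ≠ 0 by linarith), Real.one_rpow]
      have h1 : 0 ≤ φ 1 := by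
        have hb : 1 + q * 1 ≤ (1 + 1 : ℝ) ^ q := one_add_mul_self_le_rpow_one_add (by norm_num) hq
        have : φ 1 = (2:ℝ) ^ q - 1 - q := by
          simp [hφ, show (1:ℝ) - 1 = 0 by ring, Real.zero_rpow (show q ≠ 0 by linarith),
            Real.one_rpow]
          ring
        rw [this]
        norm_num at hb
        linarith
      have := hconc.2 (left_mem_Icc.mpr zero_le_one) (right_mem_Icc.mpr zero_le_one)
        (by linarith [ht.2] : (0:ℝ) ≤ 1 - t) ht.1 (by ring)
      have heq : (1 - t) • (0:ℝ) + t • (1:ℝ) = t := by simp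
      rw [heq] at this
      rw [h0] at this
      simp at this
      nlinarith [this, mul_nonneg ht.1 h1]
  intro t ht
  have := hsuff t ht
  simp only [hφ] at this
  linarith

theorem stmt_3 (z p : ℝ) (hz0 : 0 ≤ z) (hz1 : z ≤ 1) (hp : 2 ≤ p) :
    2 + z ^ p + (p * (p - 1) / 2) * z ^ (2 : ℕ) ≤ (1 + z) ^ p + (1 - z) ^ p := by
  set F : ℝ → ℝ := fun t => (1 + t) ^ p + (1 - t) ^ p - t ^ p - (p * (p - 1) / 2) * t ^ (2:ℕ)
    with hF
  have hp1 : (1:ℝ) ≤ p := by linarith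
  have hdF : ∀ t : ℝ, HasDerivAt F
      (p * (1 + t) ^ (p - 1) - p * (1 - t) ^ (p - 1) - p * t ^ (p - 1) - p * (p - 1) * t) t := by
    intro t
    have h3 := Real.hasDerivAt_rpow_const (x := t) (p := p) (Or.inr hp1)
    have h4 : HasDerivAt (fun x : ℝ => (p * (p - 1) / 2) * x ^ (2:ℕ))
        ((p * (p - 1) / 2) * (2 * t)) t := by
      have := (hasDerivAt_pow 2 t).const_mul (p * (p - 1) / 2)
      simpa using this
    have := (((hd_add p t hp1).add (hd_sub p t hp1)).sub h3).sub h4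
    refine this.congr_deriv ?_
    ring
  have hmono : MonotoneOn F (Icc 0 1) := by
    refine monotoneOn_of_deriv_nonneg (convex_Icc 0 1)
      (fun t _ => (hdF t).continuousAt.continuousWithinAt)
      (fun t _ => ((hdF t).differentiableAt).differentiableWithinAt) ?_
    intro t ht
    rw [interior_Icc] at ht
    rw [(hdF t).deriv]
    have hk := key (p - 1) (by linarith) t ⟨ht.1.le, ht.2.le⟩
    have hp0 : (0:ℝ) ≤ p := by linarith
    nlinarith
  have h0 : F 0 = 2 := by
    norm_num [hF, Real.zero_rpow (show p ≠ 0 by linarith), Real.one_rpow]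
  have := hmono (left_mem_Icc.mpr zero_le_one) ⟨hz0, hz1⟩ hz0
  rw [h0] at this
  simp only [hF] at this
  linarith
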